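/- For every positive integer m and reals K, ρ, ε > 0 with ρ + ε < K, there exists a function χ : ℝ → [0,1] such that χ(x) = 0 for |x| ≤ ρ + ε/2, χ(x) = 1 for |x| ≥ ρ + ε, and the function f(θ) := χ(K cos θ) satisfies, for every k ≤ m, sup_{θ ∈ [0,2π]} |f^(k+1)(θ)| ≤ 8^(k+1) m^k (K/ε)^(k+1). -/

import Mathlib

open Real Set

/-- Stirling-like recursion numbers. -/
def St : ℕ → ℕ → ℕ
  | 0, 0 => 1
  | 0, _+1 => 0
  | n+1, 0 => 0
  | n+1, j+1 => St n j + (j+1) * St n (j+1)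

lemma St_le : ∀ n j : ℕ, St n j ≤ n.choose j * j ^ (n - j) := by
  intro n
  induction n with
  | zero => intro j; cases j <;> simp [St]
  | succ n ih =>
    intro j
    cases j with
    | zero => simp [St]
    | succ j =>
      show St n j + (j+1) * St n (j+1) ≤ _
      have h1 : St n j ≤ n.choose j * (j+1) ^ (n - j) := by
        refine (ih j).trans ?_
        exact Nat.mul_le_mul_left _ (Nat.pow_le_pow_left (Nat.le_succ j) _)
      have h2 : (j+1) * St n (j+1) ≤ n.choose (j+1) * (j+1) ^ (n - j) := by
        rcases le_or_gt (j+1) n with h | h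
        · refine ((Nat.mul_le_mul_left _ (ih (j+1))).trans ?_)
          have : (j+1) * (n.choose (j+1) * (j+1) ^ (n - (j+1))) =
              n.choose (j+1) * ((j+1) ^ (n - (j+1)) * (j+1)) := by ring
          rw [this, ← pow_succ]
          have : n - (j+1) + 1 = n - j := by omega
          rw [this]
        · have : n.choose (j+1) = 0 := Nat.choose_eq_zero_of_lt h
          have hst : St n (j+1) = 0 := by
            have h0 := ih (j+1)
            rw [this, Nat.zero_mul] at h0
            omega
          simp [hst, this]
      calc St n j + (j+1) * St n (j+1)
          ≤ n.choose j * (j+1) ^ (n-j) + n.choose (j+1) * (j+1) ^ (n-j) := Nat.add_le_add h1 h2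
        _ = (n.choose j + n.choose (j+1)) * (j+1) ^ (n-j) := by ring
        _ = (n+1).choose (j+1) * (j+1) ^ ((n+1) - (j+1)) := by
            rw [Nat.choose_succ_succ, Nat.succ_sub_succ]

lemma St_eq_zero_of_gt : ∀ n j : ℕ, n < j → St n j = 0 := by
  intro n
  induction n with
  | zero => intro j hj; match j, hj with | j+1, _ => simp [St]
  | succ n ih =>
    intro j hj
    match j, hj with
    | j+1, hj =>
      show St n j + (j+1) * St n (j+1) = 0
      rw [ih j (by omega), ih (j+1) (by omega), Nat.mul_zero]

lemma St_le' {n j : ℕ} (hn : 1 ≤ n) (hj : j ≤ n) : St n j ≤ n.choose j * (n-1) ^ (n - j) := by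
  rcases eq_or_lt_of_le hj with rfl | h
  · simpa [Nat.sub_self] using St_le j j
  · exact (St_le n j).trans (Nat.mul_le_mul_left _ (Nat.pow_le_pow_left (by omega) _))

/-- iterated derivatives of `θ ↦ K cos θ`, encoded by phase shifts. -/
noncomputable def hfun (K : ℝ) (k : ℕ) : ℝ → ℝ := fun θ => K * Real.cos (θ + k * (π / 2))

lemma hfun_hasDerivAt (K : ℝ) (k : ℕ) (θ : ℝ) :
    HasDerivAt (hfun K k) (hfun K (k+1) θ) θ := by
  have h1 : HasDerivAt (fun θ : ℝ => θ + (k : ℝ) * (π / 2)) 1 θ :=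
    (hasDerivAt_id θ).add_const _
  have h2 := (Real.hasDerivAt_cos (θ + k * (π / 2))).comp θ h1
  have h3 := h2.const_mul K
  refine HasDerivAt.congr_deriv h3 ?_
  symm
  have : ((k : ℝ) + 1) * (π / 2) = k * (π/2) + π/2 := by ring
  simp only [hfun, Nat.cast_add, Nat.cast_one, this, ← add_assoc, Real.cos_add_pi_div_two]
  ring

lemma hfun_abs_le (K : ℝ) (hK : 0 ≤ K) (k : ℕ) (θ : ℝ) : |hfun K k θ| ≤ K := by
  rw [hfun, abs_mul, abs_of_nonneg hK]
  calc K * |Real.cos _| ≤ K * 1 := by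
        exact mul_le_mul_of_nonneg_left (Real.abs_cos_le_one _) hK
    _ = K := mul_one K

lemma hfun_zero_eq (K : ℝ) : hfun K 0 = fun θ => K * Real.cos θ := by
  funext θ; simp [hfun]

/-- product of inner derivative factors -/
noncomputable def gprod (K : ℝ) (t : List ℕ) : ℝ → ℝ :=
  fun θ => (t.map (fun k => hfun K k θ)).prod

/-- formal derivative of a product term -/
def derivList : List ℕ → List (List ℕ)
  | [] => []
  | k :: r => ((k+1) :: r) :: (derivList r).map (k :: ·)

lemma derivList_length_eq : ∀ t : List ℕ, (derivList t).length = t.length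
  | [] => rfl
  | k :: r => by simp [derivList, derivList_length_eq r]

lemma derivList_mem_length : ∀ t : List ℕ, ∀ s ∈ derivList t, s.length = t.length := by
  intro t
  induction t with
  | nil => simp [derivList]
  | cons k r ih =>
    intro s hs
    rcases List.mem_cons.1 hs with rfl | hs
    · simp
    · rcases List.mem_map.1 hs with ⟨s', hs', rfl⟩
      simp [ih s' hs']

lemma gprod_abs_le (K : ℝ) (hK : 0 ≤ K) (t : List ℕ) (θ : ℝ) :
    |gprod K t θ| ≤ K ^ t.length := by
  induction t with
  | nil => simp [gprod]
  | cons k r ih =>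
    have : gprod K (k :: r) θ = hfun K k θ * gprod K r θ := by simp [gprod]
    rw [this, abs_mul, List.length_cons, pow_succ]
    have h1 := hfun_abs_le K hK k θ
    have : K ^ r.length * K = K * K ^ r.length := by ring
    rw [this]
    exact mul_le_mul h1 ih (abs_nonneg _) hK

lemma gprod_hasDerivAt (K : ℝ) (t : List ℕ) (θ : ℝ) :
    HasDerivAt (gprod K t) (((derivList t).map (fun s => gprod K s θ)).sum) θ := by
  induction t with
  | nil =>
    simp only [derivList, List.map_nil, List.sum_nil]
    have : gprod K [] = fun _ => (1:ℝ) := by funext x; simp [gprod]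
    rw [this]; exact hasDerivAt_const θ 1
  | cons k r ih =>
    have heq : gprod K (k :: r) = fun θ => hfun K k θ * gprod K r θ := by
      funext x; simp [gprod]
    rw [heq]
    have h := (hfun_hasDerivAt K k θ).mul ih
    have hsum : ((derivList (k :: r)).map (fun s => gprod K s θ)).sum
        = hfun K (k+1) θ * gprod K r θ +
          hfun K k θ * ((derivList r).map (fun s => gprod K s θ)).sum := by
      simp only [derivList, List.map_cons, List.sum_cons, List.map_map]
      have h2 : ((derivList r).map ((fun s => gprod K s θ) ∘ (k :: ·))).sum
          = ((derivList r).map (fun s => hfun K k θ * gprod K s θ)).sum := by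
        congr 1
      rw [h2, List.sum_map_mul_left]
      have hg : gprod K ((k+1) :: r) θ = hfun K (k+1) θ * gprod K r θ := by simp [gprod]
      rw [hg]
    rw [hsum]
    exact h

open MeasureTheory intervalIntegral
open Real Set MeasureTheory intervalIntegral

noncomputable def Aop (w : ℝ) (g : ℝ → ℝ) : ℝ → ℝ :=
  fun x => w⁻¹ * ∫ t in (x - w/2)..(x + w/2), g t

section AopLemmas

variable {w : ℝ} (hw : 0 < w) {g : ℝ → ℝ} (hg : ContDiff ℝ (⊤ : ℕ∞) g)

include hg in
lemma Aop_eq (x : ℝ) :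
    Aop w g x = w⁻¹ * ((∫ t in (0:ℝ)..(x + w/2), g t) - ∫ t in (0:ℝ)..(x - w/2), g t) := by
  rw [Aop, integral_interval_sub_left ((hg.continuous.intervalIntegrable) _ _)
    ((hg.continuous.intervalIntegrable) _ _)]

include hg in
lemma contDiff_Aop : ContDiff ℝ (⊤ : ℕ∞) (Aop w g) := by
  have hG : ContDiff ℝ (⊤ : ℕ∞) (fun u : ℝ => ∫ t in (0:ℝ)..u, g t) := by
    rw [contDiff_infty_iff_deriv]
    constructor
    · intro x
      exact (hg.continuous.integral_hasStrictDerivAt 0 x).hasDerivAt.differentiableAt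
    · have : deriv (fun u : ℝ => ∫ t in (0:ℝ)..u, g t) = g := by
        funext x
        exact (hg.continuous.integral_hasStrictDerivAt 0 x).hasDerivAt.deriv
      rw [this]; exact hg
  have : Aop w g = fun x =>
      w⁻¹ * ((fun u : ℝ => ∫ t in (0:ℝ)..u, g t) (x + w/2)
        - (fun u : ℝ => ∫ t in (0:ℝ)..u, g t) (x - w/2)) := by
    funext x; exact Aop_eq hg x
  rw [this]
  refine ContDiff.mul contDiff_const (ContDiff.sub ?_ ?_)
  · exact hG.comp (contDiff_id.add contDiff_const)
  · exact hG.comp (contDiff_id.sub contDiff_const)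

include hg in
lemma hasDerivAt_Aop (x : ℝ) :
    HasDerivAt (Aop w g) (w⁻¹ * (g (x + w/2) - g (x - w/2))) x := by
  have heq : Aop w g = fun x =>
      w⁻¹ * ((fun u : ℝ => ∫ t in (0:ℝ)..u, g t) (x + w/2)
        - (fun u : ℝ => ∫ t in (0:ℝ)..u, g t) (x - w/2)) := by
    funext x; exact Aop_eq hg x
  rw [heq]
  have h1 : HasDerivAt (fun x : ℝ => (fun u : ℝ => ∫ t in (0:ℝ)..u, g t) (x + w/2))
      (g (x + w/2)) x := by
    have := (hg.continuous.integral_hasStrictDerivAt 0 (x + w/2)).hasDerivAt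
    simpa [Function.comp_def] using this.comp x ((hasDerivAt_id x).add_const (w/2))
  have h2 : HasDerivAt (fun x : ℝ => (fun u : ℝ => ∫ t in (0:ℝ)..u, g t) (x - w/2))
      (g (x - w/2)) x := by
    have := (hg.continuous.integral_hasStrictDerivAt 0 (x - w/2)).hasDerivAt
    simpa [Function.comp_def] using this.comp x ((hasDerivAt_id x).sub_const (w/2))
  exact ((h1.sub h2).const_mul _)

include hg in
lemma deriv_Aop : deriv (Aop w g) = fun x => w⁻¹ * (g (x + w/2) - g (x - w/2)) := by
  funext x; exact (hasDerivAt_Aop hg x).deriv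

include hw hg in
lemma Aop_mem_Icc (hgI : ∀ y, g y ∈ Icc (0:ℝ) 1) (x : ℝ) : Aop w g x ∈ Icc (0:ℝ) 1 := by
  have hab : x - w/2 ≤ x + w/2 := by linarith
  have hint : IntervalIntegrable g volume (x - w/2) (x + w/2) :=
    hg.continuous.intervalIntegrable _ _
  constructor
  · refine mul_nonneg (inv_nonneg.2 hw.le) ?_
    exact integral_nonneg hab (fun u _ => (hgI u).1)
  · have h1 : (∫ t in (x - w/2)..(x + w/2), g t) ≤ ∫ t in (x - w/2)..(x + w/2), (1:ℝ) :=
      integral_mono_on hab hint (intervalIntegrable_const) (fun u _ => (hgI u).2)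
    have h2 : (∫ t in (x - w/2)..(x + w/2), (1:ℝ)) = w := by
      simp
    calc Aop w g x ≤ w⁻¹ * w := by
          rw [Aop]; exact mul_le_mul_of_nonneg_left (h1.trans h2.le) (inv_nonneg.2 hw.le)
      _ = 1 := inv_mul_cancel₀ hw.ne'
end AopLemmas

section AopMore

variable {w : ℝ} (hw : 0 < w) {g : ℝ → ℝ} (hg : ContDiff ℝ (⊤ : ℕ∞) g)

include hw in
lemma Aop_eq_zero_of {p : ℝ} (hp : ∀ y, y ≤ p → g y = 0) {x : ℝ} (hx : x ≤ p - w/2) :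
    Aop w g x = 0 := by
  have hab : x - w/2 ≤ x + w/2 := by linarith
  have : (∫ t in (x - w/2)..(x + w/2), g t) = ∫ t in (x - w/2)..(x + w/2), (0:ℝ) := by
    refine integral_congr (fun y hy => ?_)
    rw [uIcc_of_le hab] at hy
    exact hp y (by have := hy.2; linarith)
  rw [Aop, this]
  simp

include hw in
lemma Aop_eq_one_of {q : ℝ} (hq : ∀ y, q ≤ y → g y = 1) {x : ℝ} (hx : q + w/2 ≤ x) :
    Aop w g x = 1 := by
  have hab : x - w/2 ≤ x + w/2 := by linarith
  have : (∫ t in (x - w/2)..(x + w/2), g t) = ∫ t in (x - w/2)..(x + w/2), (1:ℝ) := by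
    refine integral_congr (fun y hy => ?_)
    rw [uIcc_of_le hab] at hy
    exact hq y (by have := hy.1; linarith)
  rw [Aop, this]
  simp
  field_simp

lemma itd_const_mul {f : ℝ → ℝ} (hf : ContDiff ℝ (⊤ : ℕ∞) f) (c : ℝ) (n : ℕ) (x : ℝ) :
    iteratedDeriv n (fun y => c * f y) x = c * iteratedDeriv n f x := by
  simp only [← iteratedDerivWithin_univ]
  exact iteratedDerivWithin_const_mul (Set.mem_univ x) uniqueDiffOn_univ c
    (hf.of_le (by exact_mod_cast le_top)).contDiffWithinAt

lemma itd_sub {f₁ f₂ : ℝ → ℝ} (h₁ : ContDiff ℝ (⊤ : ℕ∞) f₁) (h₂ : ContDiff ℝ (⊤ : ℕ∞) f₂)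
    (n : ℕ) (x : ℝ) :
    iteratedDeriv n (fun y => f₁ y - f₂ y) x = iteratedDeriv n f₁ x - iteratedDeriv n f₂ x := by
  simp only [← iteratedDerivWithin_univ]
  exact iteratedDerivWithin_sub (Set.mem_univ x) uniqueDiffOn_univ
    (h₁.of_le (by exact_mod_cast le_top)).contDiffWithinAt (h₂.of_le (by exact_mod_cast le_top)).contDiffWithinAt

include hw hg in
lemma iteratedDeriv_Aop_succ_bound {i : ℕ} {M : ℝ}
    (hM : ∀ y, |iteratedDeriv i g y| ≤ M) (x : ℝ) :
    |iteratedDeriv (i+1) (Aop w g) x| ≤ 2 / w * M := by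
  rw [iteratedDeriv_succ', deriv_Aop hg]
  have hs1 : ContDiff ℝ (⊤ : ℕ∞) (fun y : ℝ => g (y + w/2)) :=
    hg.comp (contDiff_id.add contDiff_const)
  have hs2 : ContDiff ℝ (⊤ : ℕ∞) (fun y : ℝ => g (y - w/2)) :=
    hg.comp (contDiff_id.sub contDiff_const)
  have hdiff : ContDiff ℝ (⊤ : ℕ∞) (fun y : ℝ => g (y + w/2) - g (y - w/2)) := hs1.sub hs2
  rw [itd_const_mul hdiff, itd_sub hs1 hs2]
  have e1 : iteratedDeriv i (fun y : ℝ => g (y + w/2)) x = iteratedDeriv i g (x + w/2) := by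
    rw [iteratedDeriv_comp_add_const]
  have e2 : iteratedDeriv i (fun y : ℝ => g (y - w/2)) x = iteratedDeriv i g (x - w/2) := by
    have : (fun y : ℝ => g (y - w/2)) = fun y : ℝ => g (y + (-(w/2))) := by
      funext y; rw [sub_eq_add_neg]
    rw [this, iteratedDeriv_comp_add_const]
    exact congrArg (iteratedDeriv i g) (by ring)
  rw [e1, e2, abs_mul, abs_inv, abs_of_pos hw]
  have : |iteratedDeriv i g (x + w/2) - iteratedDeriv i g (x - w/2)| ≤ M + M :=
    (abs_sub _ _).trans (add_le_add (hM _) (hM _))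
  calc w⁻¹ * |iteratedDeriv i g (x + w/2) - iteratedDeriv i g (x - w/2)|
      ≤ w⁻¹ * (M + M) := mul_le_mul_of_nonneg_left this (inv_nonneg.2 hw.le)
    _ = 2 / w * M := by field_simp; ring

include hw hg in
lemma deriv_Aop_bound (hgI : ∀ y, g y ∈ Icc (0:ℝ) 1) (x : ℝ) :
    |iteratedDeriv 1 (Aop w g) x| ≤ w⁻¹ := by
  rw [iteratedDeriv_one, deriv_Aop hg, abs_mul, abs_inv, abs_of_pos hw]
  have h1 : |g (x + w/2) - g (x - w/2)| ≤ 1 := by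
    have a1 := hgI (x + w/2); have a2 := hgI (x - w/2)
    rw [abs_le]; constructor <;> [linarith [a1.1, a2.2]; linarith [a1.2, a2.1]]
  calc w⁻¹ * |g (x + w/2) - g (x - w/2)| ≤ w⁻¹ * 1 :=
        mul_le_mul_of_nonneg_left h1 (inv_nonneg.2 hw.le)
    _ = w⁻¹ := mul_one _

end AopMore

/-- Construction of the one-sided smooth step with good derivative bounds. -/
lemma chi_plus_exists (m : ℕ) (hm : 0 < m) (ρ ε : ℝ) (hρ : 0 < ρ) (hε : 0 < ε) :
    ∃ φ : ℝ → ℝ, ContDiff ℝ (⊤ : ℕ∞) φ ∧ (∀ x, φ x ∈ Icc (0:ℝ) 1) ∧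
      (∀ x, x ≤ ρ + ε/2 → φ x = 0) ∧ (∀ x, ρ + ε ≤ x → φ x = 1) ∧
      (∀ j, 1 ≤ j → j ≤ m + 1 → ∀ x,
        |iteratedDeriv j φ x| ≤ 6/(7*(m:ℝ)) * ((7*(m:ℝ))/ε)^j) := by
  have hm1 : (1:ℝ) ≤ (m:ℝ) := by exact_mod_cast hm
  have hm0 : (0:ℝ) < (m:ℝ) := by linarith
  set w : ℝ := 2*ε/(7*m) with hw_def
  set w1 : ℝ := ε/6 with hw1_def
  set lam : ℝ := ε/25 with hlam_def
  set s0 : ℝ := ρ + ε/2 + ε/7 + ε/12 with hs0_def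
  have hw : 0 < w := by positivity
  have hw1 : 0 < w1 := by positivity
  have hlam : 0 < lam := by positivity
  set ψ : ℝ → ℝ := fun x => Real.smoothTransition ((x - s0)/lam) with hψ_def
  have hψc : ContDiff ℝ (⊤ : ℕ∞) ψ :=
    Real.smoothTransition.contDiff.comp ((contDiff_id.sub contDiff_const).div_const _)
  have hψI : ∀ x, ψ x ∈ Icc (0:ℝ) 1 := fun x =>
    ⟨Real.smoothTransition.nonneg _, Real.smoothTransition.le_one _⟩
  have hψ0 : ∀ x, x ≤ s0 → ψ x = 0 := fun x hx =>
    Real.smoothTransition.zero_of_nonpos (div_nonpos_of_nonpos_of_nonneg (by linarith) hlam.le)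
  have hψ1 : ∀ x, s0 + lam ≤ x → ψ x = 1 := fun x hx =>
    Real.smoothTransition.one_of_one_le ((one_le_div hlam).2 (by linarith))
  set gk : ℕ → ℝ → ℝ := fun k => (Aop w)^[k] ψ with hgk_def
  have P : ∀ k : ℕ, ContDiff ℝ (⊤ : ℕ∞) (gk k) ∧ (∀ x, gk k x ∈ Icc (0:ℝ) 1) ∧
      (∀ x, x ≤ s0 - k*(w/2) → gk k x = 0) ∧
      (∀ x, s0 + lam + k*(w/2) ≤ x → gk k x = 1) ∧
      (∀ i x, i < k → |iteratedDeriv (i+1) (gk k) x| ≤ w⁻¹ * (2/w)^i) := by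
    intro k
    induction k with
    | zero =>
      refine ⟨hψc, hψI, ?_, ?_, ?_⟩
      · intro x hx; refine hψ0 x ?_; simp only [Nat.cast_zero, zero_mul, sub_zero] at hx
        exact hx
      · intro x hx; refine hψ1 x ?_; simp only [Nat.cast_zero, zero_mul, add_zero] at hx
        exact hx
      · intro i x hi; omega
    | succ k ih =>
      obtain ⟨ihc, ihI, ih0, ih1, ihD⟩ := ih
      have hgs : gk (k+1) = Aop w (gk k) := Function.iterate_succ_apply' _ _ _
      refine ⟨?_, ?_, ?_, ?_, ?_⟩
      · rw [hgs]; exact contDiff_Aop ihc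
      · rw [hgs]; intro x; exact Aop_mem_Icc hw ihc ihI x
      · rw [hgs]; intro x hx
        refine Aop_eq_zero_of hw (p := s0 - k*(w/2)) ih0 ?_
        push_cast at hx ⊢
        have hkw : ((k:ℝ)+1)*(w/2) = (k:ℝ)*(w/2) + w/2 := by ring
        linarith
      · rw [hgs]; intro x hx
        refine Aop_eq_one_of hw (q := s0 + lam + k*(w/2)) ih1 ?_
        push_cast at hx ⊢
        have hkw : ((k:ℝ)+1)*(w/2) = (k:ℝ)*(w/2) + w/2 := by ring
        linarith
      · rw [hgs]; intro i x hi
        cases i with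
        | zero =>
          simpa using deriv_Aop_bound hw ihc ihI x
        | succ i =>
          have hb := iteratedDeriv_Aop_succ_bound hw ihc
            (i := i+1) (M := w⁻¹ * (2/w)^i) (fun y => ihD i y (by omega)) x
          refine hb.trans (le_of_eq ?_)
          rw [pow_succ]
          ring
  obtain ⟨hmc, hmI, hm0', hm1', hmD⟩ := P m
  refine ⟨Aop w1 (gk m), contDiff_Aop hmc, fun x => Aop_mem_Icc hw1 hmc hmI x, ?_, ?_, ?_⟩
  · -- zero region
    intro x hx
    refine Aop_eq_zero_of hw1 (p := s0 - m*(w/2)) hm0' ?_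
    have : (m:ℝ) * (w/2) = ε/7 := by
      rw [hw_def]; field_simp
    rw [this]
    rw [hs0_def, hw1_def] at *
    linarith
  · -- one region
    intro x hx
    refine Aop_eq_one_of hw1 (q := s0 + lam + m*(w/2)) hm1' ?_
    have h1 : (m:ℝ) * (w/2) = ε/7 := by rw [hw_def]; field_simp
    rw [h1, hs0_def, hlam_def, hw1_def]
    linarith
  · -- derivative bounds
    intro j hj1 hjm x
    have h2w : 2/w = 7*(m:ℝ)/ε := by rw [hw_def]; field_simp
    have hwinv : w⁻¹ = 7*(m:ℝ)/(2*ε) := by rw [hw_def]; field_simp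
    cases j with
    | zero => omega
    | succ j =>
      cases j with
      | zero =>
        have := deriv_Aop_bound hw1 hmc hmI x
        refine this.trans ?_
        rw [hw1_def]
        rw [pow_one]
        field_simp
        exact le_refl _
      | succ j =>
        have hb := iteratedDeriv_Aop_succ_bound hw1 hmc
          (i := j+1) (M := w⁻¹ * (2/w)^j) (fun y => hmD j y (by omega)) x
        refine hb.trans (le_of_eq ?_)
        rw [h2w, hwinv, hw1_def]
        have hje : ((j+1)+1 : ℕ) = j + 2 := rfl
        rw [hje, pow_succ, pow_succ]
        have hε' : ε ≠ 0 := hε.ne'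
        have hm' : (m:ℝ) ≠ 0 := hm0.ne'
        field_simp

lemma itd_add {f₁ f₂ : ℝ → ℝ} (h₁ : ContDiff ℝ (⊤ : ℕ∞) f₁) (h₂ : ContDiff ℝ (⊤ : ℕ∞) f₂)
    (n : ℕ) (x : ℝ) :
    iteratedDeriv n (fun y => f₁ y + f₂ y) x = iteratedDeriv n f₁ x + iteratedDeriv n f₂ x := by
  simp only [← iteratedDerivWithin_univ]
  exact iteratedDerivWithin_add (Set.mem_univ x) uniqueDiffOn_univ
    (h₁.of_le (by exact_mod_cast le_top)).contDiffWithinAt (h₂.of_le (by exact_mod_cast le_top)).contDiffWithinAt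

lemma itd_zero_fun (n : ℕ) : iteratedDeriv n (fun _ : ℝ => (0:ℝ)) = fun _ => (0:ℝ) := by
  induction n with
  | zero => rfl
  | succ n ih => rw [iteratedDeriv_succ, ih]; funext x; simp

/-- Two-sided smooth cutoff with derivative bounds. -/
lemma chi_exists (m : ℕ) (hm : 0 < m) (ρ ε : ℝ) (hρ : 0 < ρ) (hε : 0 < ε) :
    ∃ χ : ℝ → ℝ, ContDiff ℝ (⊤ : ℕ∞) χ ∧ (∀ x, χ x ∈ Icc (0:ℝ) 1) ∧
      (∀ x, |x| ≤ ρ + ε/2 → χ x = 0) ∧ (∀ x, ρ + ε ≤ |x| → χ x = 1) ∧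
      (∀ j, 1 ≤ j → j ≤ m + 1 → ∀ y,
        |iteratedDeriv j χ y| ≤ 6/(7*(m:ℝ)) * ((7*(m:ℝ))/ε)^j) := by
  obtain ⟨φ, hφc, hφI, hφ0, hφ1, hφD⟩ := chi_plus_exists m hm ρ ε hρ hε
  have hbd : 0 < ρ + ε/2 := by linarith
  refine ⟨fun x => φ x + φ (-x), hφc.add (hφc.comp contDiff_neg), ?_, ?_, ?_, ?_⟩
  · intro x
    show φ x + φ (-x) ∈ Icc (0:ℝ) 1
    rcases le_or_gt 0 x with hx | hx
    · have h2 : φ (-x) = 0 := hφ0 _ (by linarith)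
      rw [h2, add_zero]; exact hφI x
    · have h1 : φ x = 0 := hφ0 _ (by linarith)
      rw [h1, zero_add]; exact hφI (-x)
  · intro x hx
    show φ x + φ (-x) = 0
    rw [abs_le] at hx
    rw [hφ0 _ hx.2, hφ0 _ (by linarith [hx.1]), add_zero]
  · intro x hx
    show φ x + φ (-x) = 1
    rcases le_or_gt 0 x with h | h
    · rw [abs_of_nonneg h] at hx
      rw [hφ1 _ hx, hφ0 _ (by linarith), add_zero]
    · rw [abs_of_neg h] at hx
      rw [hφ1 _ hx, hφ0 _ (by linarith), zero_add]
  · intro j hj1 hjm y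
    have hD : iteratedDeriv j (fun x => φ x + φ (-x)) y
        = iteratedDeriv j φ y + iteratedDeriv j (fun x => φ (-x)) y :=
      itd_add hφc (hφc.comp contDiff_neg) j y
    rcases le_or_gt 0 y with hy | hy
    · have hz : iteratedDeriv j (fun x => φ (-x)) y = 0 := by
        have hev : (fun x => φ (-x)) =ᶠ[nhds y] (fun _ => (0:ℝ)) := by
          filter_upwards [Ioi_mem_nhds (show -(ρ + ε/2) < y by linarith)] with z hz
          exact hφ0 _ (by simp at hz ⊢; linarith)
        rw [hev.iteratedDeriv_eq j, itd_zero_fun]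
      rw [hD, hz, add_zero]
      exact hφD j hj1 hjm y
    · have hz : iteratedDeriv j φ y = 0 := by
        have hev : φ =ᶠ[nhds y] (fun _ => (0:ℝ)) := by
          filter_upwards [Iio_mem_nhds (show y < ρ + ε/2 by linarith)] with z hz
          exact hφ0 _ (le_of_lt hz)
        rw [hev.iteratedDeriv_eq j, itd_zero_fun]
      rw [hD, hz, zero_add]
      rw [iteratedDeriv_comp_neg]
      rw [smul_eq_mul, abs_mul, abs_pow, abs_neg, abs_one, one_pow, one_mul]
      exact hφD j hj1 hjm (-y)
lemma St_sum_step (n : ℕ) (D : ℕ → ℝ) :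
    ∑ j ∈ Finset.range (n+1), (St n j : ℝ) * (D (j+1) + (j:ℝ) * D j)
      = ∑ j ∈ Finset.range (n+2), (St (n+1) j : ℝ) * D j := by
  have hrhs : ∑ j ∈ Finset.range (n+2), (St (n+1) j : ℝ) * D j
      = ∑ j ∈ Finset.range (n+1), (St (n+1) (j+1) : ℝ) * D (j+1) + (St (n+1) 0 : ℝ) * D 0 :=
    Finset.sum_range_succ' _ _
  have hSt0 : St (n+1) 0 = 0 := rfl
  have hStS : ∀ j : ℕ, (St (n+1) (j+1) : ℝ) = (St n j : ℝ) + ((j:ℝ)+1) * (St n (j+1) : ℝ) := by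
    intro j
    have : St (n+1) (j+1) = St n j + (j+1) * St n (j+1) := rfl
    rw [this]; push_cast; ring
  rw [hrhs, hSt0]
  simp only [Nat.cast_zero, zero_mul, mul_zero, add_zero]
  have hsplit : ∀ j ∈ Finset.range (n+1), (St (n+1) (j+1) : ℝ) * D (j+1)
      = (St n j : ℝ) * D (j+1) + ((j:ℝ)+1) * (St n (j+1) : ℝ) * D (j+1) := by
    intro j _; rw [hStS]; ring
  rw [Finset.sum_congr rfl hsplit, Finset.sum_add_distrib]
  have hlhs : ∀ j ∈ Finset.range (n+1), (St n j : ℝ) * (D (j+1) + (j:ℝ) * D j)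
      = (St n j : ℝ) * D (j+1) + (j:ℝ) * (St n j : ℝ) * D j := by
    intro j _; ring
  rw [Finset.sum_congr rfl hlhs, Finset.sum_add_distrib]
  congr 1
  -- ∑ j ∈ range (n+1), j * St n j * D j = ∑ j ∈ range (n+1), (j+1) * St n (j+1) * D (j+1)
  have h1 : ∑ j ∈ Finset.range (n+1), (j:ℝ) * (St n j : ℝ) * D j
      = ∑ j ∈ Finset.range n, ((j:ℝ)+1) * (St n (j+1) : ℝ) * D (j+1) := by
    rw [Finset.sum_range_succ' (fun j => (j:ℝ) * (St n j : ℝ) * D j) n]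
    simp only [Nat.cast_zero, zero_mul, add_zero]
    refine Finset.sum_congr rfl (fun j _ => ?_)
    push_cast; ring
  rw [h1]
  rw [Finset.sum_range_succ]
  have hz : St n (n+1) = 0 := St_eq_zero_of_gt n (n+1) (by omega)
  rw [hz]
  push_cast
  ring

lemma hasDerivAt_list_sum {α : Type*} (L : List α) (F : α → ℝ → ℝ) (F' : α → ℝ) (x : ℝ)
    (h : ∀ a ∈ L, HasDerivAt (F a) (F' a) x) :
    HasDerivAt (fun y => (L.map (fun a => F a y)).sum) ((L.map F').sum) x := by
  induction L with
  | nil => simpa using hasDerivAt_const x (0:ℝ)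
  | cons a l ih =>
    simp only [List.map_cons, List.sum_cons]
    exact (h a List.mem_cons_self).add (ih (fun b hb => h b (List.mem_cons_of_mem a hb)))

section Rep

variable {χ : ℝ → ℝ} (hχ : ContDiff ℝ (⊤ : ℕ∞) χ) (K : ℝ)

/-- summand in the chain rule expansion -/
noncomputable def Fterm (χ : ℝ → ℝ) (K : ℝ) (t : List ℕ) (θ : ℝ) : ℝ :=
  iteratedDeriv t.length χ (K * Real.cos θ) * gprod K t θ

include hχ in
lemma Fterm_hasDerivAt (t : List ℕ) (θ : ℝ) :
    HasDerivAt (fun θ => Fterm χ K t θ)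
      (((((1:ℕ)::t) :: derivList t).map (fun s => Fterm χ K s θ)).sum) θ := by
  have hKcos : HasDerivAt (fun θ : ℝ => K * Real.cos θ) (hfun K 1 θ) θ := by
    have h0 := hfun_hasDerivAt K 0 θ
    rwa [hfun_zero_eq] at h0
  have hdiff : Differentiable ℝ (iteratedDeriv t.length χ) :=
    hχ.differentiable_iteratedDeriv _ (by exact_mod_cast ENat.coe_lt_top t.length)
  have hχd : HasDerivAt (iteratedDeriv t.length χ)
      (iteratedDeriv (t.length + 1) χ (K * Real.cos θ)) (K * Real.cos θ) := by
    have h := (hdiff (K * Real.cos θ)).hasDerivAt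
    rwa [← iteratedDeriv_succ] at h
  have hcomp := hχd.comp θ hKcos
  have hg := gprod_hasDerivAt K t θ
  have hmul := hcomp.mul hg
  have hsum : ((((1:ℕ)::t) :: derivList t).map (fun s => Fterm χ K s θ)).sum
      = (iteratedDeriv (t.length + 1) χ (K * Real.cos θ) * hfun K 1 θ) * gprod K t θ
        + iteratedDeriv t.length χ (K * Real.cos θ)
          * ((derivList t).map (fun s => gprod K s θ)).sum := by
    simp only [List.map_cons, List.sum_cons]
    congr 1
    · simp only [Fterm, List.length_cons]
      have : gprod K (1 :: t) θ = hfun K 1 θ * gprod K t θ := by simp [gprod]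
      rw [this]; ring
    · have hc : (derivList t).map (fun s => Fterm χ K s θ)
          = (derivList t).map (fun s =>
              iteratedDeriv t.length χ (K * Real.cos θ) * gprod K s θ) := by
        refine List.map_congr_left (fun s hs => ?_)
        rw [Fterm, derivList_mem_length t s hs]
      rw [hc, List.sum_map_mul_left]
  rw [hsum]
  exact hmul

include hχ in
lemma rep (n : ℕ) (hn : 1 ≤ n) :
    ∃ L : List (List ℕ),
      (∀ t ∈ L, 1 ≤ t.length ∧ t.length ≤ n) ∧
      (∀ D : ℕ → ℝ, (∀ j, 0 ≤ D j) →
        (L.map (fun t => D t.length)).sum ≤ ∑ j ∈ Finset.range (n+1), (St n j : ℝ) * D j) ∧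
      (∀ θ, iteratedDeriv n (fun θ => χ (K * Real.cos θ)) θ
        = (L.map (fun t => Fterm χ K t θ)).sum) := by
  induction n with
  | zero => omega
  | succ n ih =>
    cases Nat.eq_or_lt_of_le hn with
    | inl h1 =>
      -- n + 1 = 1, i.e. n = 0
      have hn0 : n = 0 := by omega
      subst hn0
      refine ⟨[[1]], by simp, ?_, ?_⟩
      · intro D hD
        have : (([[1]] : List (List ℕ)).map (fun t => D t.length)).sum = D 1 := by simp
        rw [this]
        have h2 : ∑ j ∈ Finset.range 2, (St 1 j : ℝ) * D j
            = (St 1 0 : ℝ) * D 0 + (St 1 1 : ℝ) * D 1 := by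
          simp [Finset.sum_range_succ]
        rw [h2]
        have e0 : St 1 0 = 0 := rfl
        have e1 : St 1 1 = 1 := rfl
        rw [e0, e1]
        push_cast
        linarith [hD 0]
      · intro θ
        have hKcos : HasDerivAt (fun θ : ℝ => K * Real.cos θ) (hfun K 1 θ) θ := by
          have h0 := hfun_hasDerivAt K 0 θ
          rwa [hfun_zero_eq] at h0
        have hχd : HasDerivAt χ (deriv χ (K * Real.cos θ)) (K * Real.cos θ) :=
          ((hχ.differentiable (by simp)) _).hasDerivAt
        have hcomp := hχd.comp θ hKcos
        have : iteratedDeriv 1 (fun θ => χ (K * Real.cos θ)) θ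
            = deriv χ (K * Real.cos θ) * hfun K 1 θ := by
          rw [iteratedDeriv_one]
          exact hcomp.deriv
        rw [this]
        simp only [List.map_cons, List.map_nil, List.sum_cons, List.sum_nil, add_zero]
        rw [Fterm]
        have hg1 : gprod K [1] θ = hfun K 1 θ := by simp [gprod]
        rw [hg1, List.length_cons, List.length_nil, iteratedDeriv_one]
    | inr h2 =>
      have hn' : 1 ≤ n := by omega
      obtain ⟨L, hlen, hcount, hrep⟩ := ih hn'
      set L' : List (List ℕ) := (L.map (fun t => ((1:ℕ)::t) :: derivList t)).flatten with hL'
      have hmem : ∀ t' ∈ L', ∃ t ∈ L, t' = (1:ℕ)::t ∨ t' ∈ derivList t := by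
        intro t' ht'
        rw [hL', List.mem_flatten] at ht'
        obtain ⟨l, hl, ht'l⟩ := ht'
        rw [List.mem_map] at hl
        obtain ⟨t, htL, rfl⟩ := hl
        rcases List.mem_cons.1 ht'l with rfl | hh
        · exact ⟨t, htL, Or.inl rfl⟩
        · exact ⟨t, htL, Or.inr hh⟩
      have hflat : ∀ G : List ℕ → ℝ,
          (L'.map G).sum = (L.map (fun t => ((((1:ℕ)::t) :: derivList t).map G).sum)).sum := by
        intro G
        rw [hL', List.map_flatten, List.sum_flatten, List.map_map, List.map_map]
        rfl
      refine ⟨L', ?_, ?_, ?_⟩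
      · intro t' ht'
        obtain ⟨t, htL, hor⟩ := hmem t' ht'
        obtain ⟨ht1, ht2⟩ := hlen t htL
        rcases hor with rfl | hh
        · constructor
          · simp
          · simp; omega
        · rw [derivList_mem_length t t' hh]; omega
      · intro D hD
        rw [hflat]
        have hterm : ∀ t ∈ L, ((((1:ℕ)::t) :: derivList t).map (fun s => D s.length)).sum
            = D (t.length + 1) + (t.length : ℝ) * D t.length := by
          intro t _
          simp only [List.map_cons, List.sum_cons, List.length_cons]
          congr 1
          have hc : (derivList t).map (fun s => D s.length)
              = (derivList t).map (fun _ => D t.length) := by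
            refine List.map_congr_left (fun s hs => ?_)
            rw [derivList_mem_length t s hs]
          rw [hc, List.map_const', List.sum_replicate, derivList_length_eq, nsmul_eq_mul]
        rw [List.map_congr_left hterm]
        have hstep := hcount (fun j => D (j+1) + (j:ℝ) * D j)
          (fun j => by have := hD (j+1); have := hD j; positivity)
        refine hstep.trans ?_
        rw [St_sum_step]
      · intro θ
        have hfun_eq : iteratedDeriv n (fun θ => χ (K * Real.cos θ))
            = fun θ => (L.map (fun t => Fterm χ K t θ)).sum := funext hrep
        rw [iteratedDeriv_succ, hfun_eq]
        have hder := hasDerivAt_list_sum L (fun t θ => Fterm χ K t θ)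
          (fun t => ((((1:ℕ)::t) :: derivList t).map (fun s => Fterm χ K s θ)).sum) θ
          (fun t _ => Fterm_hasDerivAt hχ K t θ)
        rw [hder.deriv, hflat (fun s => Fterm χ K s θ)]

end Rep
lemma list_abs_sum_le (l : List ℝ) : |l.sum| ≤ (l.map (fun x => |x|)).sum := by
  induction l with
  | nil => simp
  | cons a l ih =>
    simp only [List.sum_cons, List.map_cons]
    exact (abs_add_le _ _).trans (by linarith)

/-- **Smooth test functions with near-optimal derivative bounds.**  For every `m ≥ 1` and
`K, ρ, ε > 0` with `ρ + ε < K`, there is a smooth `χ : ℝ → [0,1]` with `χ = 0` on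
`{|x| ≤ ρ + ε/2}`, `χ = 1` on `{|x| ≥ ρ + ε}`, such that `f(θ) := χ(K cos θ)` satisfies
`sup_{[0,2π]} |f^(k+1)| ≤ 8^(k+1) m^k (K/ε)^(k+1)` for every `k ≤ m`. -/
theorem stmt_6 (m : ℕ) (hm : 0 < m) (K ρ ε : ℝ) (hK : 0 < K) (hρ : 0 < ρ) (hε : 0 < ε)
    (hρε : ρ + ε < K) :
    ∃ χ : ℝ → ℝ, ContDiff ℝ (⊤ : ℕ∞) χ ∧
      (∀ x, χ x ∈ Set.Icc (0 : ℝ) 1) ∧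
      (∀ x, |x| ≤ ρ + ε / 2 → χ x = 0) ∧
      (∀ x, ρ + ε ≤ |x| → χ x = 1) ∧
      ∀ k ≤ m, ∀ θ ∈ Set.Icc (0 : ℝ) (2 * Real.pi),
        |iteratedDeriv (k + 1) (fun θ => χ (K * Real.cos θ)) θ| ≤
          8 ^ (k + 1) * (m : ℝ) ^ k * (K / ε) ^ (k + 1) := by
  obtain ⟨χ, hχc, hχI, hχ0, hχ1, hχD⟩ := chi_exists m hm ρ ε hρ hε
  refine ⟨χ, hχc, hχI, hχ0, hχ1, ?_⟩
  intro k hk θ _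
  set n := k + 1 with hn
  have hεK : ε < K := by linarith
  have hE1 : (1:ℝ) ≤ K/ε := (one_le_div hε).2 hεK.le
  have hm0 : (0:ℝ) < (m:ℝ) := by exact_mod_cast hm
  have hkm : (k:ℝ) ≤ (m:ℝ) := by exact_mod_cast hk
  obtain ⟨L, hlen, hcount, hrep⟩ := rep hχc K n (by omega)
  set D : ℕ → ℝ := fun j => 6/(7*(m:ℝ)) * ((7*(m:ℝ)*K)/ε)^j with hD
  have hDpos : ∀ j, 0 ≤ D j := fun j => by rw [hD]; positivity
  have step1 : |iteratedDeriv n (fun θ => χ (K * Real.cos θ)) θ|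
      ≤ (L.map (fun t => D t.length)).sum := by
    rw [hrep θ]
    refine (list_abs_sum_le _).trans ?_
    rw [List.map_map]
    refine List.sum_le_sum (fun t ht => ?_)
    obtain ⟨h1t, h2t⟩ := hlen t ht
    show |Fterm χ K t θ| ≤ D t.length
    rw [Fterm, abs_mul]
    have hb1 : |iteratedDeriv t.length χ (K * Real.cos θ)|
        ≤ 6/(7*(m:ℝ)) * ((7*(m:ℝ))/ε)^t.length := hχD _ h1t (by omega) _
    have hb2 : |gprod K t θ| ≤ K ^ t.length := gprod_abs_le K hK.le t θ
    calc |iteratedDeriv t.length χ (K * Real.cos θ)| * |gprod K t θ|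
        ≤ (6/(7*(m:ℝ)) * ((7*(m:ℝ))/ε)^t.length) * K ^ t.length := by
          refine mul_le_mul hb1 hb2 (abs_nonneg _) ?_
          positivity
      _ = D t.length := by
          rw [hD, mul_assoc]
          congr 1
          rw [← mul_pow]
          congr 1
          field_simp
  have step2 : (L.map (fun t => D t.length)).sum
      ≤ ∑ j ∈ Finset.range (n+1), (St n j : ℝ) * D j := hcount D hDpos
  have step3 : ∑ j ∈ Finset.range (n+1), (St n j : ℝ) * D j
      ≤ ∑ j ∈ Finset.range (n+1), ((n.choose j : ℝ) * (k:ℝ)^(n-j)) * D j := by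
    refine Finset.sum_le_sum (fun j hj => ?_)
    refine mul_le_mul_of_nonneg_right ?_ (hDpos j)
    have hst := St_le' (n := n) (j := j) (by omega) (Finset.mem_range_succ_iff.1 hj)
    have hnk : n - 1 = k := rfl
    rw [hnk] at hst
    exact_mod_cast hst
  have step4 : ∑ j ∈ Finset.range (n+1), ((n.choose j : ℝ) * (k:ℝ)^(n-j)) * D j
      ≤ 6/(7*(m:ℝ)) * (K/ε)^n
        * ∑ j ∈ Finset.range (n+1), (7*(m:ℝ))^j * (k:ℝ)^(n-j) * (n.choose j) := by
    rw [Finset.mul_sum]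
    refine Finset.sum_le_sum (fun j hj => ?_)
    have hjn : j ≤ n := Finset.mem_range_succ_iff.1 hj
    have hKj : ((7*(m:ℝ)*K)/ε)^j ≤ (7*(m:ℝ))^j * (K/ε)^n := by
      have he : ((7*(m:ℝ)*K)/ε)^j = (7*(m:ℝ))^j * (K/ε)^j := by
        rw [← mul_pow]
        congr 1
        field_simp
      rw [he]
      refine mul_le_mul_of_nonneg_left ?_ (by positivity)
      exact pow_le_pow_right₀ hE1 hjn
    calc ((n.choose j : ℝ) * (k:ℝ)^(n-j)) * D j
        = ((n.choose j : ℝ) * (k:ℝ)^(n-j) * (6/(7*(m:ℝ)))) * ((7*(m:ℝ)*K)/ε)^j := by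
          rw [hD]; ring
      _ ≤ ((n.choose j : ℝ) * (k:ℝ)^(n-j) * (6/(7*(m:ℝ)))) * ((7*(m:ℝ))^j * (K/ε)^n) := by
          refine mul_le_mul_of_nonneg_left hKj ?_
          positivity
      _ = 6/(7*(m:ℝ)) * (K/ε)^n * ((7*(m:ℝ))^j * (k:ℝ)^(n-j) * (n.choose j)) := by ring
  have step5 : ∑ j ∈ Finset.range (n+1), (7*(m:ℝ))^j * (k:ℝ)^(n-j) * (n.choose j)
      = (7*(m:ℝ) + (k:ℝ))^n := (add_pow (7*(m:ℝ)) (k:ℝ) n).symm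
  have step6 : (7*(m:ℝ) + (k:ℝ))^n ≤ (8*(m:ℝ))^n := by
    refine pow_le_pow_left₀ (by positivity) (by linarith) n
  have hfinal : 6/(7*(m:ℝ)) * (K/ε)^n * (8*(m:ℝ))^n
      ≤ 8 ^ (k + 1) * (m : ℝ) ^ k * (K / ε) ^ (k + 1) := by
    have he : 6/(7*(m:ℝ)) * (K/ε)^n * (8*(m:ℝ))^n
        = 6/7 * (8 ^ (k+1) * (m : ℝ) ^ k * (K / ε) ^ (k+1)) := by
      rw [mul_pow]
      have : (m:ℝ)^n = (m:ℝ)^k * (m:ℝ) := by rw [hn, pow_succ]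
      rw [hn] at *
      field_simp
      ring
    rw [he]
    have hpos : (0:ℝ) ≤ 8 ^ (k+1) * (m : ℝ) ^ k * (K / ε) ^ (k+1) := by positivity
    nlinarith
  calc |iteratedDeriv n (fun θ => χ (K * Real.cos θ)) θ|
      ≤ (L.map (fun t => D t.length)).sum := step1
    _ ≤ ∑ j ∈ Finset.range (n+1), (St n j : ℝ) * D j := step2
    _ ≤ ∑ j ∈ Finset.range (n+1), ((n.choose j : ℝ) * (k:ℝ)^(n-j)) * D j := step3
    _ ≤ 6/(7*(m:ℝ)) * (K/ε)^n
        * ∑ j ∈ Finset.range (n+1), (7*(m:ℝ))^j * (k:ℝ)^(n-j) * (n.choose j) := step4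
    _ = 6/(7*(m:ℝ)) * (K/ε)^n * (7*(m:ℝ) + (k:ℝ))^n := by rw [step5]
    _ ≤ 6/(7*(m:ℝ)) * (K/ε)^n * (8*(m:ℝ))^n := by
        refine mul_le_mul_of_nonneg_left step6 ?_
        positivity
    _ ≤ 8 ^ (k + 1) * (m : ℝ) ^ k * (K / ε) ^ (k + 1) := hfinal
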